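/- Let α be a positive irrational number and R, S positive integers with R/S > α. If the genitor g = ⌊(α − ⌊α⌋)/(R − αS)⌋ is positive, then g is the largest natural number x satisfying (Rx + ⌊α⌋)/(Sx + 1) < α. -/

import Mathlib

/-- If the genitor `g = ⌊(α − ⌊α⌋)/(R − αS)⌋` is positive, it is the largest
natural number `x` with `(Rx + ⌊α⌋)/(Sx + 1) < α`. -/
theorem genitor_is_greatest (α : ℝ) (hα : 0 < α) (hirr : Irrational α)
    (R S : ℤ) (hR : 0 < R) (hS : 0 < S) (hRS : α < (R : ℝ) / (S : ℝ))
    (g : ℤ) (hg : g = ⌊(α - ⌊α⌋) / ((R : ℝ) - α * S)⌋) (hgpos : 0 < g) :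
    IsGreatest {x : ℕ | ((R : ℝ) * x + ⌊α⌋) / ((S : ℝ) * x + 1) < α} g.toNat := by
  have hS' : (0:ℝ) < S := by exact_mod_cast hS
  have hD : 0 < (R:ℝ) - α * S := by
    have := (lt_div_iff₀ hS').mp hRS
    linarith
  -- irrationality: x ≠ (α - ⌊α⌋)/(R - αS) for any integer x ≥ 0
  have hne : ∀ x : ℤ, 0 ≤ x → (x:ℝ) ≠ (α - ⌊α⌋) / ((R:ℝ) - α * S) := by
    intro x hx h
    have h1 : α - (⌊α⌋:ℝ) = (x:ℝ) * ((R:ℝ) - α * S) := by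
      field_simp at h
      try rw [Int.fract] at h
      linarith [h]
    have hxS : (0:ℝ) < 1 + (x:ℝ) * S := by
      have : (0:ℝ) ≤ (x:ℝ) := by exact_mod_cast hx
      nlinarith
    have h2 : α * (1 + (x:ℝ) * S) = (x:ℝ) * R + (⌊α⌋:ℝ) := by ring_nf; ring_nf at h1; linarith
    have : α = ((((x * R + ⌊α⌋ : ℤ) : ℚ) / ((1 + x * S : ℤ) : ℚ) : ℚ) : ℝ) := by
      push_cast
      field_simp
      linarith [h2]
    exact hirr ⟨_, this.symm⟩
  have key : ∀ x : ℕ, (((R:ℝ) * x + ⌊α⌋) / ((S:ℝ) * x + 1) < α) ↔ (x:ℤ) ≤ g := by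
    intro x
    have hden : (0:ℝ) < (S:ℝ) * x + 1 := by positivity
    rw [div_lt_iff₀ hden, hg, Int.le_floor]
    push_cast
    rw [le_div_iff₀ hD]
    constructor
    · intro h; nlinarith
    · intro h
      have hne' := hne (x:ℤ) (Int.ofNat_nonneg x)
      have hlt : (x:ℝ) * ((R:ℝ) - α * S) < α - (⌊α⌋:ℝ) := by
        rcases lt_or_eq_of_le h with h' | h'
        · exact h'
        · exfalso
          apply hne' 
          push_cast
          rw [eq_div_iff hD.ne']
          exact h'.symm ▸ rfl
      nlinarith
  constructor
  · show ((R:ℝ) * (g.toNat:ℕ) + ⌊α⌋) / ((S:ℝ) * (g.toNat:ℕ) + 1) < α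
    rw [key]
    simp [Int.toNat_of_nonneg hgpos.le]
  · intro x hx
    have := (key x).mp hx
    omega
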